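/- arXiv:2511.15806 — 2 statements merged into one kernel-verified Lean document; each statement's English description precedes it below -/
import Mathlib

section
/- For every integer n ≥ 1, in the group algebra of the symmetric group S_n, the product (e + X_n)(e + X_{n-1})···(e + X_1) equals the sum of all permutations in S_n, where X_1 = 0 and X_i = (1,i) + (2,i) + ··· + (i-1,i) are the Jucys–Murphy elements and e is the identity. -/
/-- The `i`-th Jucys–Murphy element `X_{i+1} = Σ_{j<i} (j,i)` (0-indexed: the element
indexed by `i : Fin n` is the sum of transpositions `(j, i)` over `j < i`;
for `i = 0` this is `X_1 = 0`). -/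
noncomputable def JM (n : ℕ) (i : Fin n) : MonoidAlgebra ℂ (Equiv.Perm (Fin n)) :=
  ∑ j ∈ Finset.univ.filter (fun j : Fin n => j < i),
    MonoidAlgebra.single (Equiv.swap j i) (1 : ℂ)

open Finset MonoidAlgebra Equiv

/-- Permutations fixing all indices `≥ m`. -/
def JMS (n m : ℕ) : Finset (Equiv.Perm (Fin n)) :=
  Finset.univ.filter (fun π => ∀ k : Fin n, m ≤ k.val → π k = k)

lemma mem_JMS {n m : ℕ} {π : Equiv.Perm (Fin n)} :
    π ∈ JMS n m ↔ ∀ k : Fin n, m ≤ k.val → π k = k := by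
  simp [JMS]

lemma JMS_zero (n : ℕ) : JMS n 0 = {1} := by
  ext π
  simp only [mem_JMS, Finset.mem_singleton, Nat.zero_le, true_implies]
  constructor
  · intro h; exact Equiv.ext fun k => h k
  · intro h k; subst h; rfl

lemma JMS_top (n : ℕ) : JMS n n = Finset.univ := by
  ext π
  simp only [mem_JMS, Finset.mem_univ, iff_true]
  intro k hk
  exact absurd hk (by simpa using k.isLt)

lemma JM_key (n : ℕ) (i : Fin n) :
    ((1 : MonoidAlgebra ℂ (Equiv.Perm (Fin n))) + JM n i) *
        (∑ π ∈ JMS n i.val, MonoidAlgebra.single π (1 : ℂ))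
      = ∑ π ∈ JMS n (i.val + 1), MonoidAlgebra.single π (1 : ℂ) := by
  set m := i.val with hm
  have hswap_fix : ∀ (j : Fin n), j < i → ∀ k : Fin n, m + 1 ≤ k.val →
      Equiv.swap j i k = k := by
    intro j hj k hk
    apply Equiv.swap_apply_of_ne_of_ne
    · intro h; subst h
      exact absurd (lt_trans hj (show i < k from hk)) (lt_irrefl _)
    · intro h; subst h
      exact absurd hk (by omega)
  -- LHS expansion
  have hLHS : ((1 : MonoidAlgebra ℂ (Equiv.Perm (Fin n))) + JM n i) *
        (∑ π ∈ JMS n m, MonoidAlgebra.single π (1 : ℂ))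
      = (∑ π ∈ JMS n m, MonoidAlgebra.single π (1 : ℂ)) +
        ∑ j ∈ Finset.univ.filter (fun j : Fin n => j < i),
          ∑ π ∈ JMS n m, MonoidAlgebra.single (Equiv.swap j i * π) (1 : ℂ) := by
    rw [add_mul, one_mul, JM, Finset.sum_mul]
    congr 1
    refine Finset.sum_congr rfl fun j _ => ?_
    rw [Finset.mul_sum]
    refine Finset.sum_congr rfl fun π _ => ?_
    rw [MonoidAlgebra.single_mul_single, one_mul]
  rw [hLHS]
  -- RHS fiberwise decomposition
  have hmaps : ∀ π ∈ JMS n (m + 1), π i ∈ Finset.univ.filter (fun j : Fin n => j ≤ i) := by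
    intro π hπ
    simp only [Finset.mem_filter, Finset.mem_univ, true_and]
    by_contra h
    push_neg at h
    have h1 : m + 1 ≤ (π i).val := h
    have := (mem_JMS.1 hπ) (π i) h1
    have : π i = i := π.injective this
    omega
  have hfib := Finset.sum_fiberwise_of_maps_to hmaps
    (fun π => MonoidAlgebra.single π (1 : ℂ))
  rw [← hfib]
  have hT : Finset.univ.filter (fun j : Fin n => j ≤ i)
      = insert i (Finset.univ.filter (fun j : Fin n => j < i)) := by
    ext j
    simp only [Finset.mem_filter, Finset.mem_univ, true_and, Finset.mem_insert]
    rw [le_iff_lt_or_eq]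
    tauto
  rw [hT, Finset.sum_insert (by simp)]
  congr 1
  · -- fiber at i equals JMS n m
    have : (JMS n (m + 1)).filter (fun π => π i = i) = JMS n m := by
      ext π
      simp only [Finset.mem_filter, mem_JMS]
      constructor
      · rintro ⟨h1, h2⟩ k hk
        rcases eq_or_lt_of_le hk with h | h
        · have : k = i := Fin.ext h.symm
          subst this; exact h2
        · exact h1 k h
      · intro h
        exact ⟨fun k hk => h k (by omega), h i (le_refl m)⟩
    rw [this]
  · -- fibers at j < i
    refine Finset.sum_congr rfl fun j hj => ?_
    simp only [Finset.mem_filter, Finset.mem_univ, true_and] at hj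
    refine Finset.sum_nbij' (fun τ => Equiv.swap j i * τ) (fun π => Equiv.swap j i * π)
      ?_ ?_ ?_ ?_ ?_
    · intro τ hτ
      simp only [mem_JMS] at hτ
      simp only [Finset.mem_filter, mem_JMS]
      constructor
      · intro k hk
        simp only [Equiv.Perm.mul_apply, hτ k (by omega), hswap_fix j hj k hk]
      · simp only [Equiv.Perm.mul_apply, hτ i (le_refl m), Equiv.swap_apply_right]
    · intro π hπ
      simp only [Finset.mem_filter, mem_JMS] at hπ
      obtain ⟨h1, h2⟩ := hπ
      simp only [mem_JMS]
      intro k hk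
      rcases eq_or_lt_of_le hk with h | h
      · have : k = i := Fin.ext h.symm
        subst this
        simp only [Equiv.Perm.mul_apply, h2, Equiv.swap_apply_left]
      · simp only [Equiv.Perm.mul_apply, h1 k h, hswap_fix j hj k h]
    · intro τ _
      show Equiv.swap j i * (Equiv.swap j i * τ) = τ
      rw [← mul_assoc, Equiv.swap_mul_self, one_mul]
    · intro π _
      show Equiv.swap j i * (Equiv.swap j i * π) = π
      rw [← mul_assoc, Equiv.swap_mul_self, one_mul]
    · intro τ _; rfl

/-- auxiliary factor, indexed by naturals. -/
noncomputable def JMg (n k : ℕ) : MonoidAlgebra ℂ (Equiv.Perm (Fin n)) :=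
  if h : k < n then 1 + JM n ⟨k, h⟩ else 1

lemma JM_range_prod (n : ℕ) : ∀ m, m ≤ n →
    ((List.range m).reverse.map (JMg n)).prod
      = ∑ π ∈ JMS n m, MonoidAlgebra.single π (1 : ℂ) := by
  intro m
  induction m with
  | zero => intro _; simp [JMS_zero, MonoidAlgebra.one_def]
  | succ m ih =>
    intro hm
    rw [List.range_succ, List.reverse_append, List.reverse_singleton]
    simp only [List.singleton_append, List.map_cons, List.prod_cons]
    rw [ih (by omega)]
    have hg : JMg n m = 1 + JM n ⟨m, by omega⟩ := dif_pos (by omega)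
    rw [hg, JM_key n ⟨m, by omega⟩]

/-- In the group algebra `ℂ[S_n]`, `(e + X_n)(e + X_{n-1}) ⋯ (e + X_1)` equals the
sum of all permutations of `S_n`. -/
theorem jucys_murphy_product (n : ℕ) (hn : 1 ≤ n) :
    ((List.finRange n).reverse.map
        (fun i => (1 : MonoidAlgebra ℂ (Equiv.Perm (Fin n))) + JM n i)).prod
      = ∑ π : Equiv.Perm (Fin n), MonoidAlgebra.single π (1 : ℂ) := by
  have hmap : (List.finRange n).map
      (fun i => (1 : MonoidAlgebra ℂ (Equiv.Perm (Fin n))) + JM n i)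
      = (List.range n).map (JMg n) := by
    rw [← List.map_coe_finRange_eq_range, List.map_map]
    refine List.map_congr_left fun i _ => ?_
    simp only [Function.comp_apply, JMg, i.isLt, dif_pos]
  rw [List.map_reverse, hmap, ← List.map_reverse,
    JM_range_prod n n (le_refl n), JMS_top]
end

section
/- For integers n ≥ 2 and 1 ≤ m ≤ n, the symmetric subspace projector satisfies the recurrence Π_sym^{n,d} = ((e + X_n)/n) ··· ((e + X_{m+1})/(m+1)) · (Π_sym^{m,d} ⊗ I_d^{⊗(n-m)}), where X_i denotes the operator Σ_{j<i} P((j,i)) acting on (ℂ^d)^{⊗n}. -/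
/-- The permutation operator `P(π)` on `(ℂ^d)^{⊗n}`. -/
noncomputable def permMat (d n : ℕ) (π : Equiv.Perm (Fin n)) :
    Matrix (Fin n → Fin d) (Fin n → Fin d) ℂ :=
  Matrix.of fun f g => if ∀ k, f k = g (π⁻¹ k) then 1 else 0

/-- The projector onto the symmetric subspace of `(ℂ^d)^{⊗n}`:
the average of all permutation operators. -/
noncomputable def symProj (d n : ℕ) : Matrix (Fin n → Fin d) (Fin n → Fin d) ℂ :=
  ((n.factorial : ℂ))⁻¹ • ∑ π : Equiv.Perm (Fin n), permMat d n π

/-- `Π_sym^{m,d} ⊗ I^{⊗(n-m)}`, represented on `(ℂ^d)^{⊗n}`: the average of the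
permutation operators over permutations fixing the last `n - m` registers. -/
noncomputable def symProjFirst (d n m : ℕ) : Matrix (Fin n → Fin d) (Fin n → Fin d) ℂ :=
  ((m.factorial : ℂ))⁻¹ •
    ∑ π ∈ Finset.univ.filter (fun π : Equiv.Perm (Fin n) => ∀ k : Fin n, m ≤ (k : ℕ) → π k = k),
      permMat d n π

/-- The `i`-th Jucys–Murphy operator `X_{i+1} = Σ_{j<i} P((j,i))` on `(ℂ^d)^{⊗n}`
(0-indexed). -/
noncomputable def jmOp (d n : ℕ) (i : Fin n) : Matrix (Fin n → Fin d) (Fin n → Fin d) ℂ :=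
  ∑ j ∈ Finset.univ.filter (fun j : Fin n => j < i), permMat d n (Equiv.swap j i)

lemma permMat_one (d n : ℕ) : permMat d n 1 = 1 := by
  ext f g
  simp [permMat, Matrix.one_apply, funext_iff]

lemma permMat_mul (d n : ℕ) (σ τ : Equiv.Perm (Fin n)) :
    permMat d n (σ * τ) = permMat d n σ * permMat d n τ := by
  ext f g
  simp only [permMat, Matrix.mul_apply, Matrix.of_apply]
  rw [Finset.sum_eq_single (fun x => f (σ x))]
  · have h1 : (∀ k, f k = (fun x => f (σ x)) (σ⁻¹ k)) := by simp
    rw [if_pos h1, one_mul]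
    congr 1
    simp only [eq_iff_iff]
    constructor
    · intro h k
      simpa using h (σ k)
    · intro h k
      simpa using h (σ⁻¹ k)
  · intro h _ hne
    rw [if_neg, zero_mul]
    intro hc
    exact hne (funext fun x => by simpa using (hc (σ x)).symm)
  · simp

lemma coset_sum (d n k : ℕ) (hk : k < n) :
    ∑ σ ∈ Finset.univ.filter
        (fun π : Equiv.Perm (Fin n) => ∀ x : Fin n, k + 1 ≤ (x : ℕ) → π x = x),
      permMat d n σ
    = ∑ j ∈ Finset.univ.filter (fun j : Fin n => j ≤ ⟨k, hk⟩),
        ∑ π ∈ Finset.univ.filter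
            (fun π : Equiv.Perm (Fin n) => ∀ x : Fin n, k ≤ (x : ℕ) → π x = x),
          permMat d n (Equiv.swap j ⟨k, hk⟩ * π) := by
  rw [← Finset.sum_product']
  refine Finset.sum_nbij' (fun σ => (σ ⟨k, hk⟩, Equiv.swap (σ ⟨k, hk⟩) ⟨k, hk⟩ * σ))
    (fun p => Equiv.swap p.1 ⟨k, hk⟩ * p.2) ?_ ?_ ?_ ?_ ?_
  · intro σ hσ
    simp only [Finset.mem_filter, Finset.mem_univ, true_and] at hσ
    have hσk : σ ⟨k, hk⟩ ≤ ⟨k, hk⟩ := by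
      by_contra hlt
      push_neg at hlt
      have : σ (σ ⟨k, hk⟩) = σ ⟨k, hk⟩ := hσ _ hlt
      simp [σ.injective this] at hlt
    refine Finset.mem_product.2 ⟨?_, ?_⟩
    · simpa using hσk
    · simp only [Finset.mem_filter, Finset.mem_univ, true_and]
      intro x hx
      rcases eq_or_lt_of_le hx with h | h
      · have hxk : x = ⟨k, hk⟩ := Fin.ext h.symm
        subst hxk
        simp [Equiv.swap_apply_right]
      · have hfix : σ x = x := hσ x h
        simp only [Equiv.Perm.coe_mul, Function.comp_apply, hfix]
        apply Equiv.swap_apply_of_ne_of_ne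
        · intro hc
          have h1 : (σ ⟨k, hk⟩ : ℕ) ≤ k := hσk
          have h2 : (x : ℕ) = (σ ⟨k, hk⟩ : ℕ) := congrArg Fin.val hc
          omega
        · intro hc
          rw [hc] at h
          simp [Fin.lt_def] at h
  · intro p hp
    rw [Finset.mem_product] at hp
    obtain ⟨hj, hπ⟩ := hp
    simp only [Finset.mem_filter, Finset.mem_univ, true_and] at hj hπ ⊢
    intro x hx
    have hfix : p.2 x = x := hπ x (by omega)
    simp only [Equiv.Perm.coe_mul, Function.comp_apply, hfix]
    apply Equiv.swap_apply_of_ne_of_ne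
    · intro hc
      rw [hc] at hx
      have : (p.1 : ℕ) ≤ k := hj
      omega
    · intro hc
      rw [hc] at hx
      simp at hx
  · intro σ hσ
    simp only
    rw [← mul_assoc, Equiv.swap_mul_self, one_mul]
  · intro p hp
    rw [Finset.mem_product] at hp
    obtain ⟨hj, hπ⟩ := hp
    simp only [Finset.mem_filter, Finset.mem_univ, true_and] at hj hπ
    have h2 : p.2 ⟨k, hk⟩ = ⟨k, hk⟩ := hπ _ le_rfl
    have h1 : (Equiv.swap p.1 ⟨k, hk⟩ * p.2) ⟨k, hk⟩ = p.1 := by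
      simp [h2, Equiv.swap_apply_right]
    rw [h1, ← mul_assoc, Equiv.swap_mul_self, one_mul]
  · intro σ hσ
    simp only
    rw [← mul_assoc, Equiv.swap_mul_self, one_mul]

lemma one_add_jmOp (d n k : ℕ) (hk : k < n) :
    (1 : Matrix (Fin n → Fin d) (Fin n → Fin d) ℂ) + jmOp d n ⟨k, hk⟩
      = ∑ j ∈ Finset.univ.filter (fun j : Fin n => j ≤ ⟨k, hk⟩),
          permMat d n (Equiv.swap j ⟨k, hk⟩) := by
  have hfilter : Finset.univ.filter (fun j : Fin n => j ≤ (⟨k, hk⟩ : Fin n))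
      = insert (⟨k, hk⟩ : Fin n) (Finset.univ.filter (fun j : Fin n => j < ⟨k, hk⟩)) := by
    ext j
    simp [le_iff_lt_or_eq, or_comm]
  rw [hfilter, Finset.sum_insert (by simp), Equiv.swap_self, ← Equiv.Perm.one_def,
    permMat_one, jmOp]

lemma step (d n k : ℕ) (hk : k < n) :
    symProjFirst d n (k + 1)
      = ((((⟨k, hk⟩ : Fin n) : ℕ) + 1 : ℂ))⁻¹ •
          ((1 : Matrix (Fin n → Fin d) (Fin n → Fin d) ℂ) + jmOp d n ⟨k, hk⟩)
        * symProjFirst d n k := by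
  rw [symProjFirst, symProjFirst, one_add_jmOp d n k hk, smul_mul_assoc, Finset.sum_mul,
    coset_sum d n k hk]
  simp only [mul_smul_comm, Finset.mul_sum, ← permMat_mul, ← Finset.smul_sum, smul_smul,
    Nat.factorial_succ, Nat.cast_mul]
  congr 1
  rw [← mul_inv]
  congr 1
  push_cast
  ring

lemma symProjFirst_top (d n : ℕ) : symProjFirst d n n = symProj d n := by
  rw [symProjFirst, symProj,
    Finset.filter_true_of_mem fun π _ => fun x hx => absurd x.isLt (by omega)]

lemma aux (d n : ℕ) : ∀ j k, k + j = n →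
    symProj d n = (((List.finRange n).drop k).reverse.map
        (fun (i : Fin n) => (((i : ℕ) + 1 : ℂ))⁻¹ • ((1 : Matrix (Fin n → Fin d) (Fin n → Fin d) ℂ)
          + jmOp d n i))).prod * symProjFirst d n k := by
  intro j
  induction j with
  | zero =>
    intro k hkn
    have : k = n := by omega
    subst this
    rw [List.drop_eq_nil_of_le (by simp), List.reverse_nil, List.map_nil, List.prod_nil,
      one_mul, symProjFirst_top]
  | succ j ih =>
    intro k hkn
    have hk : k < n := by omega
    have hdrop : (List.finRange n).drop k = ⟨k, hk⟩ :: (List.finRange n).drop (k + 1) := by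
      rw [List.drop_eq_getElem_cons (by simpa using hk)]
      congr 1
      simp
    rw [hdrop, List.reverse_cons, List.map_append, List.prod_append]
    simp only [List.map_cons, List.map_nil, List.prod_cons, List.prod_nil, mul_one]
    rw [mul_assoc, ← step d n k hk]
    exact ih (k + 1) (by omega)

/-- Recurrence for the symmetric subspace projector:
`Π_sym^{n,d} = ((e + X_n)/n) ⋯ ((e + X_{m+1})/(m+1)) · (Π_sym^{m,d} ⊗ I^{⊗(n-m)})`. -/
theorem symProj_recurrence (n d m : ℕ) (hn : 2 ≤ n) (hm : 1 ≤ m) (hmn : m ≤ n) :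
    symProj d n
      = (((List.finRange n).drop m).reverse.map
            (fun (i : Fin n) => (((i : ℕ) + 1 : ℂ))⁻¹ • ((1 : Matrix (Fin n → Fin d) (Fin n → Fin d) ℂ)
              + jmOp d n i))).prod
        * symProjFirst d n m := by
  exact aux d n (n - m) m (by omega)
end
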